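/- Let m, n, s and p_1,…,p_s be positive integers, δ ≥ 0 a real number, and for each k ∈ {1,…,s} let L^{(k)}, U^{(k)} ∈ ℝ^{p_k} and q^{(k)} ∈ [0,1]^{m×p_k} with ∑_{ℓ=1}^{p_k} q^{(k)}_{iℓ} = 1 for every i. Consider the polytope P := {x ∈ ℝ^m : 0 ≤ x_i ≤ 1 for all i, ∑_{i=1}^m x_i = n, and for all k and all ℓ ∈ {1,…,p_k}, L^{(k)}_ℓ − δn ≤ ∑_{i=1}^m q^{(k)}_{iℓ} x_i ≤ U^{(k)}_ℓ + δn}. Then every extreme point x of P has at most min(m, 1 + ∑_{k=1}^s (p_k − 1)) fractional coordinates, i.e., #{i : 0 < x_i < 1} ≤ min(m, 1 + ∑_{k=1}^s (p_k − 1)). -/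

import Mathlib

lemma aux_ker {α β : Type*} [Fintype α] [Fintype β]
    (hlt : Fintype.card β < Fintype.card α) (f : (α → ℝ) →ₗ[ℝ] (β → ℝ)) :
    ∃ v : α → ℝ, v ≠ 0 ∧ f v = 0 := by
  have h1 : Module.finrank ℝ (α → ℝ) = Fintype.card α := Module.finrank_pi ℝ
  have h2 := f.finrank_range_add_finrank_ker
  have h3 : Module.finrank ℝ (LinearMap.range f) ≤ Fintype.card β :=
    le_trans (Submodule.finrank_le _) (le_of_eq (Module.finrank_pi ℝ))
  rw [h1] at h2
  have hker : 0 < Module.finrank ℝ (LinearMap.ker f) := by omega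
  have : Nontrivial (LinearMap.ker f) := Module.finrank_pos_iff.mp hker
  obtain ⟨v, hv, hv0⟩ := Submodule.exists_mem_ne_zero_of_ne_bot
    (Submodule.nontrivial_iff_ne_bot.mp this)
  exact ⟨v, hv0, LinearMap.mem_ker.mp hv⟩

/-- **Extreme points of the denoised LP polytope have at most
`min m (1 + ∑ k (p k − 1))` fractional coordinates (multiple protected attributes).** -/
theorem stmt4 (m n s : ℕ) (hm : 0 < m) (hn : 0 < n) (hs : 0 < s)
    (p : Fin s → ℕ) (hp : ∀ k, 0 < p k)
    (δ : ℝ) (hδ : 0 ≤ δ)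
    (L U : ∀ k : Fin s, Fin (p k) → ℝ)
    (q : ∀ k : Fin s, Fin m → Fin (p k) → ℝ)
    (hq : ∀ k i ℓ, q k i ℓ ∈ Set.Icc (0 : ℝ) 1)
    (hqsum : ∀ k i, ∑ ℓ, q k i ℓ = 1)
    (P : Set (Fin m → ℝ))
    (hP : P = {x | (∀ i, 0 ≤ x i ∧ x i ≤ 1) ∧ (∑ i, x i = (n : ℝ)) ∧
      ∀ (k : Fin s) (ℓ : Fin (p k)),
        L k ℓ - δ * n ≤ ∑ i, q k i ℓ * x i ∧ ∑ i, q k i ℓ * x i ≤ U k ℓ + δ * n})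
    (x : Fin m → ℝ) (hx : x ∈ Set.extremePoints ℝ P) :
    {i | 0 < x i ∧ x i < 1}.ncard ≤ min m (1 + ∑ k, (p k - 1)) := by
  classical
  set F : Set (Fin m) := {i | 0 < x i ∧ x i < 1} with hF
  have hFfin : F.Finite := Set.toFinite F
  set Fs : Finset (Fin m) := hFfin.toFinset with hFsdef
  have hcard : F.ncard = Fs.card := Set.ncard_eq_toFinset_card F hFfin
  have hmemFs : ∀ i, i ∈ Fs ↔ (0 < x i ∧ x i < 1) := by
    intro i; rw [hFsdef, Set.Finite.mem_toFinset]; rfl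
  refine le_min ?_ ?_
  · rw [hcard]
    calc Fs.card ≤ Fintype.card (Fin m) := Finset.card_le_univ Fs
      _ = m := Fintype.card_fin m
  by_contra hcon
  push_neg at hcon
  rw [hcard] at hcon
  -- unpack membership of x in P
  have hxP := hx.1
  rw [hP] at hxP
  obtain ⟨hbox, hsxn, hattr⟩ := hxP
  -- the index type for the independent tight constraints
  set β : Type := Option ((k : Fin s) × Fin (p k - 1)) with hβ
  have hcardβ : Fintype.card β = 1 + ∑ k, (p k - 1) := by
    show Fintype.card (Option ((k : Fin s) × Fin (p k - 1))) = _
    simp [Fintype.card_option, Fintype.card_sigma, Fintype.card_fin]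
    omega
  have hltcard : Fintype.card β < Fintype.card ↥Fs := by
    rw [hcardβ, Fintype.card_coe]; omega
  -- the embedding of Fin (p k - 1) into Fin (p k)
  have hemb : ∀ (k : Fin s) (j : Fin (p k - 1)), (j : ℕ) < p k :=
    fun k j => lt_of_lt_of_le j.2 (Nat.sub_le _ _)
  set M : Matrix β ↥Fs ℝ := fun b i =>
    Option.elim b 1 (fun kj => q kj.1 i.1 ⟨kj.2.1, hemb kj.1 kj.2⟩) with hM
  obtain ⟨v, hvne, hvker⟩ := aux_ker hltcard M.mulVecLin
  have hvk : ∀ b : β, ∑ i : ↥Fs, M b i * v i = 0 := by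
    intro b
    have := congrFun hvker b
    simpa [Matrix.mulVecLin_apply, Matrix.mulVec, dotProduct] using this
  set d : Fin m → ℝ := fun i => if h : i ∈ Fs then v ⟨i, h⟩ else 0 with hd
  have hd0 : ∀ i ∉ Fs, d i = 0 := fun i hi => dif_neg hi
  have hdv : ∀ i : ↥Fs, d i.1 = v i := fun i => dif_pos i.2
  -- generic sum conversion
  have hconv : ∀ c : Fin m → ℝ, ∑ i, c i * d i = ∑ i : ↥Fs, c i.1 * v i := by
    intro c
    rw [← Finset.sum_subset (Finset.subset_univ Fs)
      (fun i _ hi => by rw [hd0 i hi, mul_zero])]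
    rw [← Finset.sum_attach Fs (fun i => c i * d i), Finset.univ_eq_attach]
    exact Finset.sum_congr rfl fun i _ => by rw [hdv i]
  have hdsum : ∑ i, d i = 0 := by
    have := hvk none
    have h2 := hconv (fun _ => 1)
    simp only [one_mul] at h2
    rw [h2]
    simpa [hM] using this
  have hdq : ∀ (k : Fin s) (ℓ : Fin (p k)), ∑ i, q k i ℓ * d i = 0 := by
    intro k ℓ
    have hsmall : ∀ ℓ' : Fin (p k), (ℓ' : ℕ) < p k - 1 → ∑ i, q k i ℓ' * d i = 0 := by
      intro ℓ' hℓ'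
      have := hvk (some ⟨k, ⟨ℓ'.1, hℓ'⟩⟩)
      rw [hconv]
      simpa [hM] using this
    have htot : ∑ ℓ' : Fin (p k), ∑ i, q k i ℓ' * d i = 0 := by
      rw [Finset.sum_comm]
      calc ∑ i, ∑ ℓ' : Fin (p k), q k i ℓ' * d i
          = ∑ i, (∑ ℓ' : Fin (p k), q k i ℓ') * d i := by
            exact Finset.sum_congr rfl fun i _ => (Finset.sum_mul _ _ _).symm
        _ = ∑ i, d i := by
            exact Finset.sum_congr rfl fun i _ => by rw [hqsum k i, one_mul]
        _ = 0 := hdsum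
    by_cases hcase : (ℓ : ℕ) < p k - 1
    · exact hsmall ℓ hcase
    · have hℓlast : ∀ ℓ' : Fin (p k), ℓ' ≠ ℓ → ∑ i, q k i ℓ' * d i = 0 := by
        intro ℓ' hne
        apply hsmall
        have h1 : (ℓ : ℕ) = p k - 1 := le_antisymm (Nat.le_sub_one_of_lt ℓ.2) (not_lt.mp hcase)
        have h2 : (ℓ' : ℕ) ≠ (ℓ : ℕ) := fun h => hne (Fin.ext h)
        have := ℓ'.2
        omega
      calc ∑ i, q k i ℓ * d i
          = ∑ ℓ' : Fin (p k), ∑ i, q k i ℓ' * d i :=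
            (Finset.sum_eq_single ℓ (fun b _ hb => hℓlast b hb)
              (fun h => absurd (Finset.mem_univ ℓ) h)).symm
        _ = 0 := htot
  -- d is nonzero
  obtain ⟨i₀, hi₀⟩ := Function.ne_iff.mp hvne
  have hdne : d i₀.1 ≠ 0 := by rw [hdv i₀]; simpa using hi₀
  -- choose epsilon
  have hne : Fs.Nonempty := Finset.card_pos.mp (by omega)
  set c : ℝ := Fs.inf' hne (fun i => min (x i) (1 - x i)) with hc
  have hcpos : 0 < c := by
    rw [hc, Finset.lt_inf'_iff]
    intro i hi
    obtain ⟨h1, h2⟩ := (hmemFs i).mp hi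
    exact lt_min h1 (by linarith)
  have hcle1 : ∀ i ∈ Fs, c ≤ x i := fun i hi =>
    le_trans (Finset.inf'_le _ hi) (min_le_left _ _)
  have hcle2 : ∀ i ∈ Fs, c ≤ 1 - x i := fun i hi =>
    le_trans (Finset.inf'_le _ hi) (min_le_right _ _)
  set B : ℝ := Fs.sup' hne (fun i => |d i|) with hB
  have hBpos : 0 < B := lt_of_lt_of_le (abs_pos.mpr hdne) (Finset.le_sup' (fun i => |d i|) i₀.2)
  set ε : ℝ := c / B with hε
  have hεpos : 0 < ε := div_pos hcpos hBpos
  have hεb : ∀ i ∈ Fs, ε * |d i| ≤ c := by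
    intro i hi
    calc ε * |d i| ≤ ε * B := by
          exact mul_le_mul_of_nonneg_left (Finset.le_sup' (fun i => |d i|) hi) hεpos.le
      _ = c := by rw [hε]; field_simp
  -- perturbed points are in P
  have hmem : ∀ e : ℝ, |e| ≤ ε → (fun i => x i + e * d i) ∈ P := by
    intro e he
    rw [hP]
    refine ⟨?_, ?_, ?_⟩
    · intro i
      show 0 ≤ x i + e * d i ∧ x i + e * d i ≤ 1
      by_cases hi : i ∈ Fs
      · have h1 : |e * d i| ≤ c := by
          rw [abs_mul]
          calc |e| * |d i| ≤ ε * |d i| := mul_le_mul_of_nonneg_right he (abs_nonneg _)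
            _ ≤ c := hεb i hi
        have h2 := hcle1 i hi
        have h3 := hcle2 i hi
        have h4 := neg_abs_le (e * d i)
        have h5 := le_abs_self (e * d i)
        constructor <;> linarith
      · rw [hd0 i hi, mul_zero, add_zero]; exact hbox i
    · calc ∑ i, (x i + e * d i) = (∑ i, x i) + e * ∑ i, d i := by
            rw [Finset.sum_add_distrib, Finset.mul_sum]
        _ = (n : ℝ) := by rw [hdsum, mul_zero, add_zero, hsxn]
    · intro k ℓ
      have heq : ∑ i, q k i ℓ * (x i + e * d i) = ∑ i, q k i ℓ * x i := by
        calc ∑ i, q k i ℓ * (x i + e * d i)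
            = ∑ i, (q k i ℓ * x i + e * (q k i ℓ * d i)) :=
              Finset.sum_congr rfl fun i _ => by ring
          _ = (∑ i, q k i ℓ * x i) + e * ∑ i, q k i ℓ * d i := by
              rw [Finset.sum_add_distrib, Finset.mul_sum]
          _ = ∑ i, q k i ℓ * x i := by rw [hdq k ℓ, mul_zero, add_zero]
      rw [heq]
      exact hattr k ℓ
  have hy := hmem ε (le_of_eq (abs_of_pos hεpos))
  have hz := hmem (-ε) (le_of_eq (by rw [abs_neg, abs_of_pos hεpos]))
  have hseg : x ∈ openSegment ℝ (fun i => x i + ε * d i) (fun i => x i + (-ε) * d i) := by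
    refine ⟨1/2, 1/2, by norm_num, by norm_num, by norm_num, ?_⟩
    funext i
    simp only [Pi.add_apply, Pi.smul_apply, smul_eq_mul]
    ring
  have hkey := hx.2 hy hz hseg
  have h0 : x i₀.1 + ε * d i₀.1 = x i₀.1 := congrFun hkey i₀.1
  have : ε * d i₀.1 = 0 := by linarith
  rcases mul_eq_zero.mp this with h | h
  · exact absurd h (ne_of_gt hεpos)
  · exact hdne h
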